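/- Integral formula for the inverse of D + it: let D be a bounded self-adjoint operator on a complex Hilbert space H and let t ∈ ℝ with t ≠ 0. Then D + it·id_H is invertible (a bijection with bounded inverse), the function s ↦ e^{−s t²}·(D − it·id_H)∘exp(−s·D∘D) from [0,∞) to the bounded operators on H is Bochner integrable, and ∫₀^∞ e^{−s t²}·(D − it·id_H)∘exp(−s·D∘D) ds = (D + it·id_H)⁻¹. -/

import Mathlib

/-!
STATEMENT 9: Integral formula for the inverse of `D + it`: for a bounded
self-adjoint operator `D` on a complex Hilbert space and `t ≠ 0`, the operator
`D + it·id` is invertible, `s ↦ e^{−st²}·(D − it·id)∘exp(−s·D∘D)` is Bochner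
integrable on `[0,∞)`, and
`∫₀^∞ e^{−st²}·(D − it·id)∘exp(−s·D∘D) ds = (D + it·id)⁻¹`.
-/

open MeasureTheory

noncomputable section

set_option maxHeartbeats 1000000
set_option synthInstance.maxHeartbeats 400000

open NormedSpace Set Filter Topology in
/-- A bounded self-adjoint operator shifted by a non-real scalar is invertible. -/
private lemma aux_unit' {H : Type*} [NormedAddCommGroup H] [InnerProductSpace ℂ H]
    [CompleteSpace H] (D : H →L[ℂ] H) (hD : IsSelfAdjoint D) (w : ℂ) (hw : w.im ≠ 0) :
    IsUnit (D + w • (1 : H →L[ℂ] H)) := by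
  by_contra h
  have hmem : (-w) ∈ spectrum ℂ D := by
    rw [spectrum.mem_iff]
    intro hu
    apply h
    have he : D + w • (1 : H →L[ℂ] H) = -(algebraMap ℂ _ (-w) - D) := by
      rw [Algebra.algebraMap_eq_smul_one]
      simp only [map_neg, neg_smul, neg_sub, sub_neg_eq_add]
    rw [he]
    exact hu.neg
  have := hD.im_eq_zero_of_mem_spectrum hmem
  simp only [Complex.neg_im, neg_eq_zero] at this
  exact hw this

open NormedSpace Set Filter Topology in
/-- Contractivity of the heat semigroup of a self-adjoint operator. -/
private lemma aux_norm_exp' {H : Type*} [NormedAddCommGroup H] [InnerProductSpace ℂ H]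
    [CompleteSpace H] (D : H →L[ℂ] H) (hD : IsSelfAdjoint D) (s : ℝ) (hs : 0 ≤ s) :
    ‖exp (-s • (D * D))‖ ≤ 1 := by
  rcases eq_or_lt_of_le hs with rfl | hs'
  · simp only [neg_zero, zero_smul, exp_zero]
    exact ContinuousLinearMap.norm_id_le
  have hP : IsSelfAdjoint (D * D) := by
    rw [IsSelfAdjoint, star_mul, hD.star_eq]
  have hsmul : IsSelfAdjoint ((-s) • (D * D)) := by
    rw [IsSelfAdjoint, star_smul, star_trivial, hP.star_eq]
  rw [← CFC.real_exp_eq_normedSpace_exp hsmul]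
  refine norm_cfc_le zero_le_one fun x hx => ?_
  have hns : (-s : ℝ) ≠ 0 := by linarith
  have hx' : ((Units.mk0 (-s) hns)⁻¹ : ℝˣ) • x ∈ spectrum ℝ (D * D) := by
    rw [← spectrum.smul_mem_smul_iff (r := Units.mk0 (-s) hns)]
    simpa using hx
  have hy0 : 0 ≤ ((-s)⁻¹ * x) := by
    have := spectrum_star_mul_self_nonneg (b := D)
    rw [hD.star_eq] at this
    simpa [Units.smul_def] using this _ hx'
  have hxle : x ≤ 0 := by
    have hxx : (-s) * ((-s)⁻¹ * x) = x := by field_simp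
    nlinarith
  rw [Real.norm_eq_abs, abs_of_pos (Real.exp_pos _)]
  exact Real.exp_le_one_iff.mpr hxle

open NormedSpace Set Filter Topology in
/-- Factorization of the heat semigroup of `D² + t²`. -/
private lemma aux_factor' {H : Type*} [NormedAddCommGroup H] [InnerProductSpace ℂ H]
    [CompleteSpace H] (D : H →L[ℂ] H) (t s : ℝ) :
    exp (s • (-(D * D + (t ^ 2 : ℝ) • (1 : H →L[ℂ] H)))) =
      Real.exp (-(s * t ^ 2)) • exp (-s • (D * D)) := by
  have hc : Commute ((-s) • (D * D)) ((-(s * t ^ 2)) • (1 : H →L[ℂ] H)) :=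
    ((Commute.one_right (D * D)).smul_left (-s)).smul_right (-(s * t ^ 2))
  have h1 : s • (-(D * D + (t ^ 2 : ℝ) • (1 : H →L[ℂ] H)))
      = (-s) • (D * D) + (-(s * t ^ 2)) • (1 : H →L[ℂ] H) := by
    module
  let +nondep : NormedAlgebra ℚ (H →L[ℂ] H) := .restrictScalars ℚ ℂ _
  rw [h1, exp_add_of_commute hc]
  have h3 : exp ((-(s * t ^ 2)) • (1 : H →L[ℂ] H))
      = Real.exp (-(s * t ^ 2)) • (1 : H →L[ℂ] H) := by
    rw [← Algebra.algebraMap_eq_smul_one, ← algebraMap_exp_comm,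
      Algebra.algebraMap_eq_smul_one, Real.exp_eq_exp_ℝ]
  rw [h3, mul_smul_comm, mul_one]

open NormedSpace Set Filter Topology in
theorem inverse_of_suspended_as_heat_integral {H : Type*} [NormedAddCommGroup H]
    [InnerProductSpace ℂ H] [CompleteSpace H]
    (D : H →L[ℂ] H) (hD : IsSelfAdjoint D) (t : ℝ) (ht : t ≠ 0) :
    IsUnit (D + (Complex.I * t) • (1 : H →L[ℂ] H)) ∧
      IntegrableOn
        (fun s : ℝ =>
          Real.exp (-(s * t ^ 2)) •
            ((D - (Complex.I * t) • (1 : H →L[ℂ] H)) * NormedSpace.exp (-s • (D * D))))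
        (Set.Ici 0) ∧
      ∫ s in Set.Ici (0 : ℝ),
          Real.exp (-(s * t ^ 2)) •
            ((D - (Complex.I * t) • (1 : H →L[ℂ] H)) * NormedSpace.exp (-s • (D * D))) =
        Ring.inverse (D + (Complex.I * t) • (1 : H →L[ℂ] H)) := by
  set c : ℂ := Complex.I * t with hc
  have hcim : c.im ≠ 0 := by
    simp only [hc, Complex.mul_im, Complex.I_re, Complex.I_im, Complex.ofReal_re,
      Complex.ofReal_im, one_mul, zero_mul, mul_zero, zero_add, add_zero]
    exact ht
  have hUnitP : IsUnit (D + c • (1 : H →L[ℂ] H)) := aux_unit' D hD c hcim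
  have hUnitM : IsUnit (D - c • (1 : H →L[ℂ] H)) := by
    have := aux_unit' D hD (-c) (by simpa using hcim)
    simpa [sub_eq_add_neg, neg_smul] using this
  set B : H →L[ℂ] H := D * D + (t ^ 2 : ℝ) • 1 with hBdef
  have hsmul_coe : (t ^ 2 : ℝ) • (1 : H →L[ℂ] H) = ((t : ℂ) ^ 2) • 1 := by
    rw [show ((t : ℂ) ^ 2) = algebraMap ℝ ℂ (t ^ 2) by push_cast; simp, algebraMap_smul]
  have hfac : (D - c • (1 : H →L[ℂ] H)) * (D + c • 1) = B := by
    have hcc : c * c = -((t : ℂ) ^ 2) := by rw [hc]; ring_nf; rw [Complex.I_sq]; ring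
    rw [hBdef, hsmul_coe]
    simp only [mul_add, sub_mul, smul_mul_assoc, mul_smul_comm, smul_sub, smul_smul, one_mul,
      mul_one, hcc, neg_smul]
    abel
  have hUnitB : IsUnit B := hfac ▸ hUnitM.mul hUnitP
  have h0 : Commute D (c • (1 : H →L[ℂ] H)) := (Commute.one_right D).smul_right c
  have hcomm : Commute (D - c • (1 : H →L[ℂ] H)) (D + c • 1) :=
    (((Commute.refl D).add_right h0)).sub_left ((h0.symm).add_right (Commute.refl _))
  set Binv := Ring.inverse B with hBinvdef
  set G : ℝ → (H →L[ℂ] H) := fun s => exp (s • (-B)) with hGdef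
  have hG_eq : ∀ s, G s = Real.exp (-(s * t ^ 2)) • exp (-s • (D * D)) := by
    intro s; rw [hGdef]; exact aux_factor' D t s
  have hG_norm : ∀ s, 0 ≤ s → ‖G s‖ ≤ Real.exp (-(s * t ^ 2)) := by
    intro s hs
    rw [hG_eq s, norm_smul, Real.norm_eq_abs, abs_of_pos (Real.exp_pos _)]
    calc Real.exp (-(s * t ^ 2)) * ‖exp (-s • (D * D))‖
        ≤ Real.exp (-(s * t ^ 2)) * 1 :=
          mul_le_mul_of_nonneg_left (aux_norm_exp' D hD s hs) (Real.exp_pos _).le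
      _ = Real.exp (-(s * t ^ 2)) := mul_one _
  let +nondep : NormedAlgebra ℚ (H →L[ℂ] H) := .restrictScalars ℚ ℂ _
  have hG_cont : Continuous G := exp_continuous.comp (continuous_id.smul continuous_const)
  have hG_int : IntegrableOn G (Ioi 0) := by
    refine Integrable.mono' (exp_neg_integrableOn_Ioi 0 (show (0 : ℝ) < t ^ 2 by positivity))
      hG_cont.aestronglyMeasurable.restrict ?_
    filter_upwards [ae_restrict_mem measurableSet_Ioi] with s hs
    calc ‖G s‖ ≤ Real.exp (-(s * t ^ 2)) := hG_norm s hs.le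
      _ = Real.exp (-t ^ 2 * s) := by ring_nf
  have hG_deriv : ∀ s : ℝ, HasDerivAt G (G s * (-B)) s := fun s =>
    hasDerivAt_exp_smul_const (𝕂 := ℝ) (-B) s
  have hF_deriv : ∀ s : ℝ, HasDerivAt (fun u => -(G u * Binv)) (G s) s := by
    intro s
    have h := ((hG_deriv s).mul_const Binv).neg
    have h' : HasDerivAt (fun u => -(G u * Binv)) (-(G s * -B * Binv)) s := h
    convert h' using 1
    rw [mul_neg, neg_mul, neg_neg, mul_assoc, hBinvdef, Ring.mul_inverse_cancel _ hUnitB, mul_one]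
  have hF_tendsto : Tendsto (fun u => -(G u * Binv)) atTop (𝓝 0) := by
    have h1 : Tendsto (fun s : ℝ => s * t ^ 2) atTop atTop :=
      Tendsto.atTop_mul_const (by positivity) tendsto_id
    have h2 : Tendsto (fun s : ℝ => Real.exp (-(s * t ^ 2))) atTop (𝓝 0) :=
      Real.tendsto_exp_atBot.comp (tendsto_neg_atTop_atBot.comp h1)
    have hg : Tendsto (fun s : ℝ => Real.exp (-(s * t ^ 2)) * ‖Binv‖) atTop (𝓝 0) := by
      simpa using h2.mul_const ‖Binv‖
    refine squeeze_zero_norm' ?_ hg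
    filter_upwards [eventually_ge_atTop (0 : ℝ)] with s hs
    calc ‖-(G s * Binv)‖ = ‖G s * Binv‖ := norm_neg _
      _ ≤ ‖G s‖ * ‖Binv‖ := norm_mul_le _ _
      _ ≤ Real.exp (-(s * t ^ 2)) * ‖Binv‖ :=
        mul_le_mul_of_nonneg_right (hG_norm s hs) (norm_nonneg _)
  have hInt_Ioi : ∫ s in Ioi (0 : ℝ), G s = Binv := by
    have h := integral_Ioi_of_hasDerivAt_of_tendsto' (fun x _ => hF_deriv x) hG_int hF_tendsto
    rw [h, hGdef]
    simp
  have hfun : (fun s : ℝ => Real.exp (-(s * t ^ 2)) •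
      ((D - c • (1 : H →L[ℂ] H)) * NormedSpace.exp (-s • (D * D))))
      = fun s => (ContinuousLinearMap.mul ℝ (H →L[ℂ] H)) (D - c • 1) (G s) := by
    funext s
    rw [ContinuousLinearMap.mul_apply', hG_eq s, mul_smul_comm]
  refine ⟨hUnitP, ?_, ?_⟩
  · rw [hfun, integrableOn_Ici_iff_integrableOn_Ioi]
    exact ((ContinuousLinearMap.mul ℝ (H →L[ℂ] H)) (D - c • 1)).integrable_comp hG_int
  · rw [hfun, integral_Ici_eq_integral_Ioi,
      ((ContinuousLinearMap.mul ℝ (H →L[ℂ] H)) (D - c • 1)).integral_comp_comm hG_int,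
      hInt_Ioi, ContinuousLinearMap.mul_apply']
    obtain ⟨u, hu⟩ := hUnitP
    have key : (D + c • (1 : H →L[ℂ] H)) * ((D - c • 1) * Binv) = 1 := by
      rw [← mul_assoc, ← hcomm.eq, hfac, hBinvdef, Ring.mul_inverse_cancel _ hUnitB]
    rw [← hu, Ring.inverse_unit]
    exact (Units.inv_eq_of_mul_eq_one_right (by rw [hu]; exact key)).symm

end
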